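/- With notation as above, for each λ in the closed upper half of the unit circle 𝕌₊ = {z ∈ ℂ : |z| = 1, Im z ≥ 0}, let p*_λ ∈ K\U be the point with X(p*_λ) = λ and Z(p*_λ) = 0. Then every K-orbit in K\U contains exactly one point of the form p*_λ with λ ∈ 𝕌₊, and the stabilizer of p*_λ in K = SO(2) equals K if λ ∈ {−1, 1} and equals {±1} otherwise. -/

import Mathlib

open Matrix

noncomputable section

def θm : Matrix (Fin 2) (Fin 2) ℂ := !![0, Complex.I; -Complex.I, 0]

def Rot (t : ℝ) : Matrix (Fin 2) (Fin 2) ℂ :=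
  !![(Real.cos t : ℂ), -(Real.sin t : ℂ); (Real.sin t : ℂ), (Real.cos t : ℂ)]

def Mf (u : Matrix (Fin 2) (Fin 2) ℂ) : Matrix (Fin 2) (Fin 2) ℂ := star u * θm * u

def Xf (u : Matrix (Fin 2) (Fin 2) ℂ) : ℂ := Complex.I * Mf u 1 0

def Zf (u : Matrix (Fin 2) (Fin 2) ℂ) : ℂ := Mf u 0 0

def SU2 (u : Matrix (Fin 2) (Fin 2) ℂ) : Prop := star u * u = 1 ∧ u.det = 1

/-- A representative in `SU(2)` of the point `p*_λ ∈ K\U`, i.e. with `X = λ` and `Z = 0`. -/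
def IsPt (lam : ℂ) (w : Matrix (Fin 2) (Fin 2) ℂ) : Prop := SU2 w ∧ Xf w = lam ∧ Zf w = 0

-- ==== auxiliary ====
open Complex

local notation "cj" => starRingEnd ℂ

def Wm (a b : ℂ) : Matrix (Fin 2) (Fin 2) ℂ := !![a, b; -(cj b), cj a]

lemma star_fin_two (a b c d : ℂ) : star !![a,b;c,d] = !![cj a, cj c; cj b, cj d] := by
  ext i j; fin_cases i <;> fin_cases j <;>
    simp [Matrix.star_eq_conjTranspose, conjTranspose_apply]

lemma star_Wm (a b : ℂ) : star (Wm a b) = !![cj a, -b; cj b, a] := by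
  rw [Wm, star_fin_two]; simp

lemma su2_form {u : Matrix (Fin 2) (Fin 2) ℂ} (h : SU2 u) :
    ∃ a b : ℂ, u = Wm a b ∧ a * cj a + b * cj b = 1 := by
  obtain ⟨h1, h2⟩ := h
  have hadj : star u = u.adjugate := by
    calc star u = (u.adjugate * u) * star u := by rw [Matrix.adjugate_mul, h2]; simp
    _ = u.adjugate * (u * star u) := by rw [Matrix.mul_assoc]
    _ = u.adjugate := by rw [mul_eq_one_comm.mp h1]; simp
  have h00 := congrFun (congrFun hadj 0) 0
  have h01 := congrFun (congrFun hadj 0) 1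
  rw [Matrix.eta_fin_two u, star_fin_two, Matrix.adjugate_fin_two] at h00 h01
  simp at h00 h01
  have e1 : u 1 0 = -cj (u 0 1) := by
    have := congrArg cj h01; simpa using this
  have e0 : u 1 1 = cj (u 0 0) := h00.symm
  refine ⟨u 0 0, u 0 1, ?_, ?_⟩
  · ext i j; fin_cases i <;> fin_cases j <;> simp [Wm, e1, e0]
  · have hd := h2
    rw [Matrix.det_fin_two] at hd
    have e2 : cj (u 0 1) = -u 1 0 := by rw [e1]; ring
    rw [← h00] at hd
    rw [e2]; linear_combination hd
lemma mk2_eq {a b c d e f g h : ℂ} (h1 : a = e) (h2 : b = f) (h3 : c = g) (h4 : d = h) :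
    !![a,b;c,d] = !![e,f;g,h] := by rw [h1, h2, h3, h4]

lemma su2_Wm {a b : ℂ} (h : a * cj a + b * cj b = 1) : SU2 (Wm a b) := by
  constructor
  · rw [star_Wm, Wm, Matrix.mul_fin_two, Matrix.one_fin_two]
    apply mk2_eq
    · linear_combination h
    · ring
    · ring
    · linear_combination h
  · rw [Wm, Matrix.det_fin_two_of]; linear_combination h

lemma Mf_Wm (a b : ℂ) : Mf (Wm a b) =
    !![Complex.I * (a*b - cj a * cj b), Complex.I * (cj a^2 + b^2);
       -(Complex.I * (a^2 + cj b^2)), Complex.I * (cj a * cj b - a*b)] := by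
  rw [Mf, star_Wm, Wm, θm, Matrix.mul_fin_two, Matrix.mul_fin_two]
  apply mk2_eq <;> ring

lemma Xf_Wm (a b : ℂ) : Xf (Wm a b) = a^2 + cj b^2 := by
  rw [Xf, Mf_Wm]
  norm_num [Matrix.cons_val_zero, Matrix.cons_val_one]
  have := Complex.I_mul_I
  linear_combination (-(a^2 + cj b^2)) * this

lemma Zf_Wm (a b : ℂ) : Zf (Wm a b) = Complex.I * (a*b - cj a * cj b) := by
  rw [Zf, Mf_Wm]
  norm_num [Matrix.cons_val_zero]

lemma Wm_mul_Rot (a b : ℂ) (t : ℝ) :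
    Wm a b * Rot t = Wm (a * Real.cos t + b * Real.sin t) (-(a * Real.sin t) + b * Real.cos t) := by
  rw [Wm, Wm, Rot, Matrix.mul_fin_two]
  apply mk2_eq <;> (try simp only [map_add, _root_.map_mul, map_neg, Complex.conj_ofReal]) <;> ring

lemma Xf_Wm_rot (a b : ℂ) (t : ℝ) :
    Xf (Wm a b * Rot t) = (Real.cos t:ℂ)^2 * Xf (Wm a b) + (Real.sin t:ℂ)^2 * cj (Xf (Wm a b))
      - 2 * (Real.cos t:ℂ) * (Real.sin t:ℂ) * Complex.I * Zf (Wm a b) := by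
  rw [Wm_mul_Rot, Xf_Wm, Xf_Wm, Zf_Wm]
  simp only [map_add, _root_.map_mul, map_neg, map_pow, Complex.conj_conj, Complex.conj_ofReal]
  have := Complex.I_mul_I
  linear_combination (2 * (Real.cos t:ℂ) * (Real.sin t:ℂ) * (a*b - cj a * cj b)) * this

lemma Zf_Wm_rot (a b : ℂ) (t : ℝ) :
    Zf (Wm a b * Rot t) = ((Real.cos t:ℂ)^2 - (Real.sin t:ℂ)^2) * Zf (Wm a b)
      + (Real.cos t:ℂ) * (Real.sin t:ℂ) * Complex.I * (cj (Xf (Wm a b)) - Xf (Wm a b)) := by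
  rw [Wm_mul_Rot, Zf_Wm, Zf_Wm, Xf_Wm]
  simp only [map_add, _root_.map_mul, map_neg, map_pow, Complex.conj_conj, Complex.conj_ofReal]
  ring

lemma rot_su2 (t : ℝ) : SU2 (Rot t) := by
  have h := Real.sin_sq_add_cos_sq t
  have h' : ((Real.cos t:ℂ))^2 + ((Real.sin t:ℂ))^2 = 1 := by
    push_cast; norm_cast; linarith
  constructor
  · rw [Rot, star_fin_two, Matrix.mul_fin_two, Matrix.one_fin_two]
    simp only [map_neg, Complex.conj_ofReal]
    apply mk2_eq
    · linear_combination h'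
    · ring
    · ring
    · linear_combination h'
  · rw [Rot, Matrix.det_fin_two_of]; linear_combination h'

lemma theta_rot_comm (t : ℝ) : θm * Rot t = Rot t * θm := by
  rw [θm, Rot, Matrix.mul_fin_two, Matrix.mul_fin_two]
  apply mk2_eq <;> ring

lemma Mf_rot_left (s : ℝ) (v : Matrix (Fin 2) (Fin 2) ℂ) : Mf (Rot s * v) = Mf v := by
  have h1 : star (Rot s) * θm * Rot s = θm := by
    rw [Matrix.mul_assoc, theta_rot_comm, ← Matrix.mul_assoc, (rot_su2 s).1, Matrix.one_mul]
  rw [Mf, Mf, StarMul.star_mul]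
  calc star v * star (Rot s) * θm * (Rot s * v)
      = star v * (star (Rot s) * θm * Rot s) * v := by
        simp only [Matrix.mul_assoc]
    _ = star v * θm * v := by rw [h1]

lemma Mf_rot_right (t : ℝ) (v : Matrix (Fin 2) (Fin 2) ℂ) :
    Mf (v * Rot t) = star (Rot t) * Mf v * Rot t := by
  rw [Mf, Mf, StarMul.star_mul]; simp only [Matrix.mul_assoc]

lemma su2_mul {u v : Matrix (Fin 2) (Fin 2) ℂ} (hu : SU2 u) (hv : SU2 v) : SU2 (u * v) := by
  constructor
  · rw [StarMul.star_mul]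
    calc star v * star u * (u * v) = star v * (star u * u) * v := by simp only [Matrix.mul_assoc]
    _ = 1 := by rw [hu.1, Matrix.mul_one, hv.1]
  · rw [Matrix.det_mul, hu.2, hv.2, mul_one]

lemma exists_cos_sin (p q : ℝ) (h : p^2 + q^2 = 1) :
    ∃ α : ℝ, Real.cos α = p ∧ Real.sin α = q := by
  have hp1 : -1 ≤ p := by nlinarith
  have hp2 : p ≤ 1 := by nlinarith
  have hs : Real.sin (Real.arccos p) = |q| := by
    rw [Real.sin_arccos, show (1 : ℝ) - p^2 = q^2 by linarith, Real.sqrt_sq_eq_abs]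
  rcases le_or_gt 0 q with hq | hq
  · exact ⟨Real.arccos p, Real.cos_arccos hp1 hp2, by rw [hs, _root_.abs_of_nonneg hq]⟩
  · refine ⟨-Real.arccos p, by rw [Real.cos_neg]; exact Real.cos_arccos hp1 hp2, ?_⟩
    rw [Real.sin_neg, hs, _root_.abs_of_neg hq, neg_neg]

lemma cent_su2 {k : Matrix (Fin 2) (Fin 2) ℂ} (hk : SU2 k) (hc : k * θm = θm * k) :
    ∃ s : ℝ, k = Rot s := by
  obtain ⟨a, b, hke, hab⟩ := su2_form hk
  rw [hke, Wm, θm, Matrix.mul_fin_two, Matrix.mul_fin_two] at hc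
  have h00 := congrFun (congrFun hc 0) 0
  have h01 := congrFun (congrFun hc 0) 1
  simp at h00 h01
  have hb : cj b = b := by
    have : b * Complex.I = cj b * Complex.I := by rw [h00]; ring
    exact (mul_right_cancel₀ Complex.I_ne_zero this).symm
  have ha : cj a = a := by
    have : a * Complex.I = cj a * Complex.I := by rw [h01]; ring
    exact (mul_right_cancel₀ Complex.I_ne_zero this).symm
  have har : a = (a.re : ℂ) := ((Complex.conj_eq_iff_re).mp ha).symm
  have hbr : b = (b.re : ℂ) := ((Complex.conj_eq_iff_re).mp hb).symm
  have hsum : (a.re)^2 + (-b.re)^2 = 1 := by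
    have h1 : ((a.re:ℂ))^2 + ((b.re:ℂ))^2 = 1 := by
      linear_combination hab - a * ha - (a + (a.re:ℂ)) * har - b * hb - (b + (b.re:ℂ)) * hbr
    have h2 : ((a.re^2 + b.re^2 : ℝ) : ℂ) = ((1:ℝ):ℂ) := by push_cast; linear_combination h1
    have h3 := Complex.ofReal_injective h2
    nlinarith [h3]
  obtain ⟨α, hcos, hsin⟩ := exists_cos_sin a.re (-b.re) hsum
  refine ⟨α, ?_⟩
  rw [hke, Wm, Rot]
  apply mk2_eq
  · rw [hcos]; exact har
  · rw [hsin, hbr]; simp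
  · rw [hsin, hb, hbr]; simp
  · rw [hcos, ha, har]; simp

lemma Rot_zero : Rot 0 = 1 := by
  rw [Rot, Matrix.one_fin_two]; norm_num

lemma Rot_pi : Rot Real.pi = -1 := by
  ext i j; fin_cases i <;> fin_cases j <;> simp [Rot]

lemma Rot_mul (s t : ℝ) : Rot s * Rot t = Rot (s + t) := by
  rw [Rot, Rot, Rot, Matrix.mul_fin_two]
  apply mk2_eq <;> push_cast [Real.cos_add, Real.sin_add] <;> ring

lemma su2_star {w : Matrix (Fin 2) (Fin 2) ℂ} (hw : SU2 w) : SU2 (star w) := by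
  constructor
  · rw [star_star]; exact mul_eq_one_comm.mp hw.1
  · have : (star w).det = star w.det := by
      rw [Matrix.star_eq_conjTranspose, Matrix.det_conjTranspose]
    rw [this, hw.2]; simp

lemma Xf_rot_left (s : ℝ) (v : Matrix (Fin 2) (Fin 2) ℂ) : Xf (Rot s * v) = Xf v := by
  rw [Xf, Xf, Mf_rot_left]

lemma Zf_rot_left (s : ℝ) (v : Matrix (Fin 2) (Fin 2) ℂ) : Zf (Rot s * v) = Zf v := by
  rw [Zf, Zf, Mf_rot_left]

lemma Mf_of_su2 {u : Matrix (Fin 2) (Fin 2) ℂ} (h : SU2 u) :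
    Mf u = !![Zf u, Complex.I * cj (Xf u); -(Complex.I * Xf u), -(Zf u)] := by
  obtain ⟨a, b, rfl, hab⟩ := su2_form h
  rw [Mf_Wm, Xf_Wm, Zf_Wm]
  apply mk2_eq
  · rfl
  · simp only [map_add, map_pow, Complex.conj_conj]; try ring
  · rfl
  · ring

lemma I_sub_conj (z : ℂ) : Complex.I * (z - cj z) = ((-2 * z.im : ℝ) : ℂ) := by
  apply Complex.ext <;>
    simp [Complex.mul_re, Complex.mul_im, Complex.sub_re, Complex.sub_im] <;> ring

lemma conj_sub_I (z : ℂ) : Complex.I * (cj z - z) = ((2 * z.im : ℝ) : ℂ) := by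
  have := I_sub_conj z
  push_cast at this ⊢
  linear_combination -this


set_option maxHeartbeats 1000000 in
/-- every point `p*_λ` (`λ ∈ 𝕌₊`) exists; every `K`-orbit in `K\U` contains exactly
one point of the form `p*_λ` with `λ ∈ 𝕌₊`; and the stabilizer of `p*_λ` in `K = SO(2)` is all
of `K` when `λ = ±1`, and `{±1}` otherwise. -/
theorem stmt_7 :
    (∀ lam : ℂ, ‖lam‖ = 1 → 0 ≤ lam.im → ∃ w, IsPt lam w) ∧
    (∀ u, SU2 u → ∃! lam : ℂ, (‖lam‖ = 1 ∧ 0 ≤ lam.im) ∧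
      ∃ w, IsPt lam w ∧ ∃ s t : ℝ, u = Rot s * w * Rot t) ∧
    (∀ lam : ℂ, ‖lam‖ = 1 → 0 ≤ lam.im → ∀ w, IsPt lam w →
      ((lam = 1 ∨ lam = -1) → ∀ t : ℝ, ∃ s : ℝ, w * Rot t = Rot s * w) ∧
      (¬(lam = 1 ∨ lam = -1) → ∀ t : ℝ,
        ((∃ s : ℝ, w * Rot t = Rot s * w) ↔ (Rot t = 1 ∨ Rot t = -1)))) := by
  refine ⟨?_, ?_, ?_⟩
  · -- existence of p*_λ
    intro lam habs _
    set μ : ℂ := Complex.exp ((lam.arg : ℂ) * Complex.I / 2) with hμ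
    have hμ2 : μ * μ = lam := by
      rw [hμ, ← Complex.exp_add]
      have : (lam.arg : ℂ) * Complex.I / 2 + (lam.arg : ℂ) * Complex.I / 2
          = (lam.arg : ℂ) * Complex.I := by ring
      rw [this]
      conv_rhs => rw [← Complex.norm_mul_exp_arg_mul_I lam]
      rw [habs]; simp
    have hμabs : μ * cj μ = 1 := by
      rw [Complex.mul_conj]
      have : ‖μ‖ = 1 := by
        rw [hμ, Complex.norm_exp]
        have : ((lam.arg : ℂ) * Complex.I / 2).re = 0 := by
          simp [Complex.div_re]
        rw [this, Real.exp_zero]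
      rw [← Complex.sq_norm, this]; norm_num
    refine ⟨Wm μ 0, su2_Wm (by simpa using hμabs), ?_, ?_⟩
    · rw [Xf_Wm]; simpa [sq] using hμ2
    · rw [Zf_Wm]; simp
  · -- unique orbit representative
    intro u hu
    obtain ⟨a, b, hue, hab⟩ := su2_form hu
    set X := Xf (Wm a b) with hX
    set x := X.re with hx
    set y := X.im with hyy
    have hZre : Zf (Wm a b) = ((-2 * (a*b).im : ℝ) : ℂ) := by
      rw [Zf_Wm, show cj a * cj b = cj (a*b) by rw [_root_.map_mul], I_sub_conj]
    set ζ : ℝ := -2 * (a*b).im with hζ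
    -- norm identity
    have hnormC : X * cj X + (Zf (Wm a b))^2 = 1 := by
      rw [hX, Xf_Wm, Zf_Wm]
      simp only [map_add, map_pow, Complex.conj_conj]
      have hI := Complex.I_mul_I
      linear_combination (a * cj a + b * cj b + 1) * hab + ((a*b - cj a * cj b)^2) * hI
    have hnorm : x^2 + y^2 + ζ^2 = 1 := by
      have h1 : X * cj X = ((x^2 + y^2 : ℝ) : ℂ) := by
        rw [Complex.mul_conj]
        norm_cast
        rw [Complex.normSq_apply]; ring
      rw [h1, hZre] at hnormC
      have h2 : ((x^2 + y^2 + ζ^2 : ℝ) : ℂ) = ((1:ℝ) : ℂ) := by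
        push_cast at hnormC ⊢; linear_combination hnormC
      have := Complex.ofReal_injective h2
      linarith [this]
    set r := Real.sqrt (ζ^2 + y^2) with hrdef
    have hr0 : 0 ≤ r := Real.sqrt_nonneg _
    have hr2 : r^2 = ζ^2 + y^2 := Real.sq_sqrt (by positivity)
    -- choose the angle
    obtain ⟨α, hα1, hα2⟩ : ∃ α : ℝ, Real.cos α * ζ + Real.sin α * y = 0 ∧
        Real.cos α * y - Real.sin α * ζ = r := by
      rcases eq_or_ne r 0 with h0 | h0
      · have hz0 : ζ = 0 := by nlinarith [hr2, sq_nonneg y, sq_nonneg ζ]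
        have hy0 : y = 0 := by nlinarith [hr2, sq_nonneg y, sq_nonneg ζ]
        exact ⟨0, by simp [hz0, hy0], by simp [hz0, hy0, h0]⟩
      · obtain ⟨α, hc, hs⟩ := exists_cos_sin (y/r) (-ζ/r)
          (by field_simp; nlinarith [hr2])
        refine ⟨α, ?_, ?_⟩
        · rw [hc, hs]; field_simp; ring
        · rw [hc, hs]; field_simp; nlinarith [hr2]
    set t := α / 2 with ht
    have h2t : 2 * t = α := by rw [ht]; ring
    have hca : Real.cos t ^ 2 - Real.sin t ^ 2 = Real.cos α := by
      rw [← h2t, Real.cos_two_mul]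
      nlinarith [Real.sin_sq_add_cos_sq t]
    have hsa : 2 * Real.sin t * Real.cos t = Real.sin α := by
      rw [← h2t, Real.sin_two_mul]
    have hpy : ((Real.cos t : ℂ))^2 + ((Real.sin t : ℂ))^2 = 1 := by
      have := Real.sin_sq_add_cos_sq t
      push_cast; norm_cast; linarith
    have hcaC : ((Real.cos t : ℂ))^2 - ((Real.sin t : ℂ))^2 = ((Real.cos α : ℝ) : ℂ) := by
      exact_mod_cast congrArg (Complex.ofReal) hca
    have hsaC : 2 * (Real.sin t : ℂ) * (Real.cos t : ℂ) = ((Real.sin α : ℝ) : ℂ) := by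
      exact_mod_cast congrArg (Complex.ofReal) hsa
    have hXeq : X = (x : ℂ) + (y : ℂ) * Complex.I := (Complex.re_add_im X).symm
    have hcjX : cj X = (x : ℂ) - (y : ℂ) * Complex.I := by
      rw [hXeq]; simp [map_add, _root_.map_mul, Complex.conj_ofReal, Complex.conj_I]; ring
    set w := Wm a b * Rot t with hw
    have hsu2w : SU2 w := su2_mul (su2_Wm hab) (rot_su2 t)
    have hα1C : ((Real.cos α : ℝ) : ℂ) * (ζ : ℂ) + ((Real.sin α : ℝ) : ℂ) * (y : ℂ) = 0 := by
      exact_mod_cast congrArg (Complex.ofReal) hα1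
    have hα2C : ((Real.cos α : ℝ) : ℂ) * (y : ℂ) - ((Real.sin α : ℝ) : ℂ) * (ζ : ℂ) = ((r:ℝ) : ℂ) := by
      exact_mod_cast congrArg (Complex.ofReal) hα2
    have hZw : Zf w = 0 := by
      rw [hw, Zf_Wm_rot, hZre, ← hX, hcjX, hXeq]
      have hI := Complex.I_mul_I
      linear_combination (ζ:ℂ) * hcaC - ((y:ℂ)) * Complex.I * Complex.I * hsaC + hα1C -
        ((y:ℂ)) * ((Real.sin α : ℝ):ℂ) * hI
    have hXw : Xf w = (x : ℂ) + (r : ℂ) * Complex.I := by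
      rw [hw, Xf_Wm_rot, hZre, ← hX, hcjX, hXeq]
      have hI := Complex.I_mul_I
      linear_combination (x:ℂ) * hpy + (y:ℂ) * Complex.I * hcaC - (ζ:ℂ) * Complex.I * hsaC +
        Complex.I * hα2C
    set lam := (x : ℂ) + (r : ℂ) * Complex.I with hlam
    have hlamre : lam.re = x := by rw [hlam]; simp
    have hlamim : lam.im = r := by rw [hlam]; simp
    have habs : ‖lam‖ = 1 := by
      have h1 : Complex.normSq lam = 1 := by
        rw [Complex.normSq_apply, hlamre, hlamim]
        nlinarith [hr2, hnorm]
      rw [Complex.norm_def, h1, Real.sqrt_one]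
    refine ⟨lam, ⟨⟨habs, by rw [hlamim]; exact hr0⟩, w, ⟨hsu2w, hXw, hZw⟩, 0, -t, ?_⟩, ?_⟩
    · rw [Rot_zero, Matrix.one_mul, hw, Matrix.mul_assoc, Rot_mul]
      rw [show t + -t = 0 by ring, Rot_zero, Matrix.mul_one, hue]
    · -- uniqueness
      rintro lam' ⟨⟨habs', him'⟩, w', ⟨hw'su2, hXw', hZw'⟩, s', t', hu'⟩
      obtain ⟨a', b', hwe', hab'⟩ := su2_form hw'su2
      have hXw'' : Xf (Wm a' b') = lam' := by rw [← hwe']; exact hXw'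
      have hZw'' : Zf (Wm a' b') = 0 := by rw [← hwe']; exact hZw'
      have hXu : X = Xf (w' * Rot t') := by
        rw [hX, ← hue, hu', Matrix.mul_assoc, Xf_rot_left]
      rw [hwe', Xf_Wm_rot, hXw'', hZw''] at hXu
      have hre : x = lam'.re := by
        have hcj' : cj lam' = (lam'.re : ℂ) - (lam'.im : ℂ) * Complex.I := by
          apply Complex.ext <;> simp
        have hlam'eq : lam' = (lam'.re : ℂ) + (lam'.im : ℂ) * Complex.I :=
          (Complex.re_add_im lam').symm
        rw [hXeq, hcj'] at hXu
        nth_rewrite 1 [hlam'eq] at hXu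
        have h5 := congrArg Complex.re hXu
        simp only [pow_two, Complex.add_re, Complex.sub_re, Complex.mul_re, Complex.mul_im,
          Complex.add_im, Complex.sub_im, Complex.ofReal_re, Complex.ofReal_im,
          Complex.I_re, Complex.I_im, mul_zero, zero_mul, mul_one, sub_zero, add_zero,
          zero_add, zero_sub] at h5
        have hpy2 : Real.cos t' * Real.cos t' + Real.sin t' * Real.sin t' = 1 := by
          nlinarith [Real.sin_sq_add_cos_sq t']
        linear_combination h5 + lam'.re * hpy2
      have him2 : lam'.im = r := by
        have h6 : lam'.re^2 + lam'.im^2 = 1 := by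
          have := Complex.sq_norm lam'
          rw [habs'] at this
          rw [Complex.normSq_apply] at this
          ring_nf at this ⊢
          linarith [this]
        have h7 : lam'.im^2 = r^2 := by
          have hx2 : x^2 = lam'.re^2 := by rw [hre]
          linarith [hnorm, hr2, h6, hx2]
        nlinarith [him', hr0, h7, sq_nonneg (lam'.im - r)]
      apply Complex.ext
      · rw [hlamre, hre]
      · rw [hlamim, him2]

  · -- stabilizers
    intro lam habs him w hw
    obtain ⟨hwsu2, hwX, hwZ⟩ := hw
    have hws : w * star w = 1 := mul_eq_one_comm.mp hwsu2.1
    constructor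
    · intro hpm t
      have hclam : cj lam = lam := by rcases hpm with h | h <;> subst h <;> simp
      have hsu2wt : SU2 (w * Rot t) := su2_mul hwsu2 (rot_su2 t)
      obtain ⟨a, b, hwe, hab⟩ := su2_form hwsu2
      have hXw : Xf (Wm a b) = lam := by rw [← hwe]; exact hwX
      have hZw : Zf (Wm a b) = 0 := by rw [← hwe]; exact hwZ
      have hXwt : Xf (w * Rot t) = lam := by
        rw [hwe, Xf_Wm_rot, hXw, hZw, hclam]
        have : ((Real.cos t : ℂ))^2 + ((Real.sin t : ℂ))^2 = 1 := by
          have := Real.sin_sq_add_cos_sq t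
          push_cast; norm_cast; linarith
        linear_combination lam * this
      have hZwt : Zf (w * Rot t) = 0 := by
        rw [hwe, Zf_Wm_rot, hXw, hZw, hclam]; ring
      have hMf : Mf (w * Rot t) = Mf w := by
        rw [Mf_of_su2 hsu2wt, Mf_of_su2 hwsu2, hXwt, hZwt, hwX, hwZ]
      set k := w * Rot t * star w with hk
      have hksu2 : SU2 k := su2_mul hsu2wt (su2_star hwsu2)
      have hθ : star k * θm * k = θm := by
        have h1 : star k * θm * k = w * Mf (w * Rot t) * star w := by
          rw [hk, Mf]
          simp only [StarMul.star_mul, star_star, Matrix.mul_assoc]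
        rw [h1, hMf, Mf]
        calc w * (star w * θm * w) * star w = (w * star w) * θm * (w * star w) := by
              simp only [Matrix.mul_assoc]
        _ = θm := by rw [hws]; simp
      have hcomm : k * θm = θm * k := by
        have hks1 : k * star k = 1 := mul_eq_one_comm.mp hksu2.1
        calc k * θm = k * (star k * θm * k) := by rw [hθ]
        _ = (k * star k) * θm * k := by simp only [Matrix.mul_assoc]
        _ = θm * k := by rw [hks1, Matrix.one_mul]
      obtain ⟨s, hksr⟩ := cent_su2 hksu2 hcomm
      refine ⟨s, ?_⟩
      have : k * w = w * Rot t := by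
        rw [hk, Matrix.mul_assoc, hwsu2.1, Matrix.mul_one]
      rw [← this, hksr]
    · intro hne t
      have hy : lam.im ≠ 0 := by
        intro him0
        apply hne
        have hlr : lam = (lam.re : ℂ) := by
          apply Complex.ext <;> simp [him0]
        rw [hlr, Complex.norm_real, Real.norm_eq_abs] at habs
        rcases abs_eq (by norm_num : (0:ℝ) ≤ 1) |>.mp habs with h | h
        · left; rw [hlr, h]; norm_num
        · right; rw [hlr, h]; norm_num
      constructor
      · rintro ⟨s, hst⟩
        obtain ⟨a, b, hwe, hab⟩ := su2_form hwsu2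
        have hXw : Xf (Wm a b) = lam := by rw [← hwe]; exact hwX
        have hZw : Zf (Wm a b) = 0 := by rw [← hwe]; exact hwZ
        have hXeq : Xf (w * Rot t) = lam := by
          rw [hst, Xf_rot_left, hwX]
        rw [hwe, Xf_Wm_rot, hXw, hZw] at hXeq
        have hpy : ((Real.cos t : ℂ))^2 + ((Real.sin t : ℂ))^2 = 1 := by
          have := Real.sin_sq_add_cos_sq t
          push_cast; norm_cast; linarith
        have hs2 : ((Real.sin t : ℂ))^2 * (cj lam - lam) = 0 := by
          linear_combination hXeq - lam * hpy
        have hcl : cj lam - lam ≠ 0 := by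
          intro h0
          apply hy
          have := conj_sub_I lam
          rw [h0, mul_zero] at this
          have := Complex.ofReal_eq_zero.mp this.symm
          linarith
        have hsin : Real.sin t = 0 := by
          have := (mul_eq_zero.mp hs2).resolve_right hcl
          have h2 : (Real.sin t : ℂ) = 0 := pow_eq_zero_iff (by norm_num) |>.mp this
          exact_mod_cast h2
        have hcos : Real.cos t = 1 ∨ Real.cos t = -1 := by
          have h := Real.sin_sq_add_cos_sq t
          rw [hsin] at h
          have h2 : Real.cos t ^ 2 = 1 := by nlinarith
          have h3 : (Real.cos t - 1) * (Real.cos t + 1) = 0 := by nlinarith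
          rcases mul_eq_zero.mp h3 with h | h
          · left; linarith
          · right; linarith
        rcases hcos with h | h
        · left; rw [Rot, h, hsin, Matrix.one_fin_two]; norm_num
        · right
          rw [Rot, h, hsin]
          ext i j; fin_cases i <;> fin_cases j <;> simp
      · rintro (h1 | h1)
        · exact ⟨0, by rw [h1, Rot_zero, Matrix.mul_one, Matrix.one_mul]⟩
        · exact ⟨Real.pi, by rw [h1, Rot_pi, Matrix.mul_neg, Matrix.mul_one,
            Matrix.neg_mul, Matrix.one_mul]⟩

end
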